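/- For every real $r$ and positive integer $n$ with $r \ge \frac{n+1}{2}$, one has $n^{2r} + 2\sum_{k=1}^{n-1} k^{2r} < n^{2r}\left(1 + 4\left(1 - \frac{1}{n}\right)^{2r}\right)$, provided $n \ge 2$. -/

import Mathlib

open Real Finset

lemma lemA (p : ℕ) : ∀ m : ℕ, ((p:ℝ)+1) * ∑ k ∈ range m, (k:ℝ)^p ≤ (m:ℝ)^(p+1) := by
  intro m
  induction m with
  | zero => simp
  | succ m ih =>
    rw [Finset.sum_range_succ, mul_add]
    have key : ((m:ℝ))^(p+1) + ((p:ℝ)+1) * (m:ℝ)^p ≤ ((m:ℝ)+1)^(p+1) := by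
      rcases Nat.eq_zero_or_pos m with hm | hm
      · subst hm
        rcases Nat.eq_zero_or_pos p with hp | hp
        · subst hp; norm_num
        · simp [zero_pow (by omega : p ≠ 0), zero_pow (by omega : p + 1 ≠ 0)]
      · have hm' : (0:ℝ) < m := by exact_mod_cast hm
        have ha : (-2:ℝ) ≤ 1/(m:ℝ) := le_trans (by norm_num) (by positivity : (0:ℝ) ≤ 1/(m:ℝ))
        have hb := one_add_mul_le_pow ha (p+1)
        push_cast at hb
        have hmul := mul_le_mul_of_nonneg_right hb (le_of_lt (pow_pos hm' (p+1)))
        have e1 : (1 + ((p:ℝ)+1) * (1/(m:ℝ))) * (m:ℝ)^(p+1)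
            = (m:ℝ)^(p+1) + ((p:ℝ)+1) * (m:ℝ)^p := by
          field_simp
          ring
        have e2 : (1 + 1/(m:ℝ))^(p+1) * (m:ℝ)^(p+1) = ((m:ℝ)+1)^(p+1) := by
          rw [← mul_pow]
          congr 1
          field_simp
        rw [e1, e2] at hmul
        linarith
    push_cast
    linarith
lemma lemB (p N : ℕ) (hN : 1 ≤ N) (hp : N ≤ p) :
    ∑ k ∈ Icc 1 N, (k:ℝ)^p < 2 * (N:ℝ)^p := by
  have hNpos : (0:ℝ) < N := by exact_mod_cast hN
  have hsum : ∑ k ∈ Icc 1 N, (k:ℝ)^p = ∑ k ∈ range N, (k:ℝ)^p + (N:ℝ)^p := by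
    have hins : range (N+1) = insert 0 (Icc 1 N) := by
      ext x; simp only [Finset.mem_range, Finset.mem_insert, Finset.mem_Icc, Nat.lt_succ_iff]
      omega
    have h0 : (0:ℕ) ∉ Icc 1 N := by simp
    have hp0 : p ≠ 0 := by omega
    have := Finset.sum_range_succ (fun k => (k:ℝ)^p) N
    rw [hins, Finset.sum_insert h0] at this
    simp only [Nat.cast_zero, zero_pow hp0] at this
    linarith
  have hA := lemA p N
  have hlt : ∑ k ∈ range N, (k:ℝ)^p < (N:ℝ)^p := by
    have h1 : ((p:ℝ)+1) * ∑ k ∈ range N, (k:ℝ)^p ≤ (N:ℝ)^(p+1) := hA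
    have h2 : (N:ℝ)^(p+1) = (N:ℝ) * (N:ℝ)^p := by ring
    have h3 : (N:ℝ) < (p:ℝ)+1 := by
      have : (N:ℝ) ≤ (p:ℝ) := by exact_mod_cast hp
      linarith
    have hpow : (0:ℝ) < (N:ℝ)^p := pow_pos hNpos p
    nlinarith
  rw [hsum]; linarith

theorem head_power_sum_bound (r : ℝ) (n : ℕ) (hn : 2 ≤ n) (h : ((n : ℝ) + 1) / 2 ≤ r) :
    (n : ℝ) ^ (2 * r) + 2 * ∑ k ∈ Finset.Icc 1 (n - 1), (k : ℝ) ^ (2 * r) <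
      (n : ℝ) ^ (2 * r) * (1 + 4 * (1 - 1 / n) ^ (2 * r)) := by
  set N := n - 1 with hNdef
  have hN1 : 1 ≤ N := by omega
  have hnN : n = N + 1 := by omega
  have hnpos : (0:ℝ) < n := by positivity
  have hNpos : (0:ℝ) < N := by exact_mod_cast hN1
  have hcast : (N:ℝ) = (n:ℝ) - 1 := by rw [hnN]; push_cast; ring
  have hr : ((n:ℝ) + 1) ≤ 2 * r := by linarith
  have hone : (0:ℝ) ≤ 1 - 1/(n:ℝ) := by
    rw [sub_nonneg, div_le_one hnpos]; linarith
  -- RHS identity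
  have h2 : (n:ℝ)^(2*r) * (1 - 1/(n:ℝ))^(2*r) = (N:ℝ)^(2*r) := by
    rw [← Real.mul_rpow (le_of_lt hnpos) hone]
    congr 1
    rw [hcast]; field_simp
  -- key sum bound
  have main : ∑ k ∈ Icc 1 N, (k:ℝ)^(2*r) < 2 * (N:ℝ)^(2*r) := by
    have hterm : ∀ k ∈ Icc 1 N, (k:ℝ)^(2*r) ≤ (N:ℝ)^(2*r) * ((k:ℝ)^(n+1) / (N:ℝ)^(n+1)) := by
      intro k hk
      obtain ⟨hk1, hkN⟩ := Finset.mem_Icc.1 hk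
      have hkpos : (0:ℝ) < k := by exact_mod_cast hk1
      have hkN' : (k:ℝ) ≤ N := by exact_mod_cast hkN
      have hx : (0:ℝ) < (k:ℝ)/(N:ℝ) := by positivity
      have hx1 : (k:ℝ)/(N:ℝ) ≤ 1 := by rw [div_le_one hNpos]; exact hkN'
      have hexp : ((n+1 : ℕ):ℝ) ≤ 2*r := by push_cast; linarith
      have hmono := Real.rpow_le_rpow_of_exponent_ge hx hx1 hexp
      rw [Real.rpow_natCast, div_pow] at hmono
      have hsplit : (k:ℝ)^(2*r) = (N:ℝ)^(2*r) * ((k:ℝ)/(N:ℝ))^(2*r) := by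
        rw [← Real.mul_rpow (le_of_lt hNpos) (le_of_lt hx)]
        congr 1
        field_simp
      rw [hsplit]
      exact mul_le_mul_of_nonneg_left hmono (Real.rpow_nonneg (le_of_lt hNpos) _)
    calc ∑ k ∈ Icc 1 N, (k:ℝ)^(2*r)
        ≤ ∑ k ∈ Icc 1 N, (N:ℝ)^(2*r) * ((k:ℝ)^(n+1) / (N:ℝ)^(n+1)) :=
          Finset.sum_le_sum hterm
      _ = (N:ℝ)^(2*r) / (N:ℝ)^(n+1) * ∑ k ∈ Icc 1 N, (k:ℝ)^(n+1) := by
          rw [Finset.mul_sum]; congr 1; ext k; ring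
      _ < (N:ℝ)^(2*r) / (N:ℝ)^(n+1) * (2 * (N:ℝ)^(n+1)) := by
          apply mul_lt_mul_of_pos_left (lemB (n+1) N hN1 (by omega)) (by positivity)
      _ = 2 * (N:ℝ)^(2*r) := by field_simp
  have hrw : (n:ℝ)^(2*r) * (1 + 4 * (1 - 1/(n:ℝ))^(2*r))
      = (n:ℝ)^(2*r) + 4 * (N:ℝ)^(2*r) := by
    rw [mul_add, mul_one, ← h2]; ring
  rw [hrw]
  have : ∑ k ∈ Finset.Icc 1 (n-1), (k:ℝ)^(2*r) = ∑ k ∈ Icc 1 N, (k:ℝ)^(2*r) := rfl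
  rw [this]
  linarith
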